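/- Let 0 < ε ≤ 1/3, let a₀ > 0, and let Q and Q₀ be 3×3 real symmetric traceless matrices with λ_min(Q) ≥ −1/3 + ε and λ_min(Q₀) ≥ −1/3 + ε. Set L = a₀(Q + (1/3)I), L₀ = a₀(Q₀ + (1/3)I), and for any invertible 3×3 real matrix F set G = L^{-1/2} F L₀^{1/2}. Then |adj G| ≥ (ε/3) · |adj F|. -/

import Mathlib

open Matrix

/-- Frobenius norm of a 3×3 real matrix: |M| = √(tr(Mᵀ M)). -/
noncomputable def frobNorm (M : Matrix (Fin 3) (Fin 3) ℝ) : ℝ :=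
  Real.sqrt (Matrix.trace (Mᵀ * M))

/-- Smallest eigenvalue of a symmetric (Hermitian) real matrix. -/
noncomputable def lMin {M : Matrix (Fin 3) (Fin 3) ℝ} (h : M.IsHermitian) : ℝ :=
  ⨅ i, h.eigenvalues i

/-- Largest eigenvalue of a symmetric (Hermitian) real matrix. -/
noncomputable def lMax {M : Matrix (Fin 3) (Fin 3) ℝ} (h : M.IsHermitian) : ℝ :=
  ⨆ i, h.eigenvalues i

/-- The unique symmetric positive (semi)definite square root of a positive definite matrix. -/
noncomputable def msqrt {M : Matrix (Fin 3) (Fin 3) ℝ} (h : M.PosDef) : Matrix (Fin 3) (Fin 3) ℝ :=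
  h.posSemidef.1.eigenvectorUnitary.1 * diagonal ((↑) ∘ (√·) ∘ h.posSemidef.1.eigenvalues) *
    (star h.posSemidef.1.eigenvectorUnitary : Matrix (Fin 3) (Fin 3) ℝ)

section Helpers

set_option linter.unusedSectionVars false

variable {n : Type*} [Fintype n] [DecidableEq n]

lemma myPsdSmul {A : Matrix n n ℝ} (h : A.PosSemidef) {c : ℝ} (hc : 0 ≤ c) :
    (c • A).PosSemidef := by
  refine Matrix.PosSemidef.of_dotProduct_mulVec_nonneg ?_ fun x => ?_
  · unfold Matrix.IsHermitian
    rw [conjTranspose_smul, h.1]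
    simp
  · rw [smul_mulVec, dotProduct_smul, smul_eq_mul]
    exact mul_nonneg hc (h.dotProduct_mulVec_nonneg x)

lemma myPsdTrace {A : Matrix n n ℝ} (h : A.PosSemidef) : 0 ≤ A.trace := by
  rw [Matrix.trace]
  refine Finset.sum_nonneg fun i _ => ?_
  have := h.dotProduct_mulVec_nonneg (Pi.single i 1)
  simpa [dotProduct, Matrix.mulVec, Pi.single_apply] using this

lemma mySpecLow {A : Matrix n n ℝ} (hA : A.IsHermitian) {c : ℝ}
    (h : ∀ i, c ≤ hA.eigenvalues i) : (A - c • 1).PosSemidef := by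
  have hU : (hA.eigenvectorUnitary : Matrix n n ℝ) * star (hA.eigenvectorUnitary : Matrix n n ℝ) = 1 :=
    Matrix.mem_unitaryGroup_iff.mp hA.eigenvectorUnitary.2
  have key : A - c • 1 =
      (hA.eigenvectorUnitary : Matrix n n ℝ) * diagonal (fun i => hA.eigenvalues i - c) *
        star (hA.eigenvectorUnitary : Matrix n n ℝ) := by
    have h1 : diagonal (fun i => hA.eigenvalues i - c)
        = diagonal (RCLike.ofReal ∘ hA.eigenvalues) - c • (1 : Matrix n n ℝ) := by
      rw [smul_one_eq_diagonal, ← diagonal_sub]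
      rfl
    have hspec := hA.spectral_theorem
    simp only [Unitary.conjStarAlgAut_apply] at hspec
    rw [h1, mul_sub, sub_mul, ← hspec]
    congr 1
    rw [mul_smul_comm, smul_mul_assoc, mul_one, hU]
  rw [key]
  exact (Matrix.PosSemidef.diagonal (fun i => sub_nonneg.mpr (h i))).mul_mul_conjTranspose_same _

lemma mySpecHigh {A : Matrix n n ℝ} (hA : A.IsHermitian) {c : ℝ}
    (h : ∀ i, hA.eigenvalues i ≤ c) : (c • 1 - A).PosSemidef := by
  have hU : (hA.eigenvectorUnitary : Matrix n n ℝ) * star (hA.eigenvectorUnitary : Matrix n n ℝ) = 1 :=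
    Matrix.mem_unitaryGroup_iff.mp hA.eigenvectorUnitary.2
  have key : c • 1 - A =
      (hA.eigenvectorUnitary : Matrix n n ℝ) * diagonal (fun i => c - hA.eigenvalues i) *
        star (hA.eigenvectorUnitary : Matrix n n ℝ) := by
    have h1 : diagonal (fun i => c - hA.eigenvalues i)
        = c • (1 : Matrix n n ℝ) - diagonal (RCLike.ofReal ∘ hA.eigenvalues) := by
      rw [smul_one_eq_diagonal, ← diagonal_sub]
      rfl
    have hspec := hA.spectral_theorem
    simp only [Unitary.conjStarAlgAut_apply] at hspec
    rw [h1, mul_sub, sub_mul, ← hspec]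
    congr 1
    rw [mul_smul_comm, smul_mul_assoc, mul_one, hU]
  rw [key]
  exact (Matrix.PosSemidef.diagonal (fun i => sub_nonneg.mpr (h i))).mul_mul_conjTranspose_same _

lemma myTraceEig {A : Matrix n n ℝ} (hA : A.IsHermitian) :
    A.trace = ∑ i, hA.eigenvalues i := by
  have := congrArg Matrix.trace hA.spectral_theorem
  simp only [Unitary.conjStarAlgAut_apply] at this
  rw [Matrix.trace_mul_comm, ← mul_assoc, Matrix.mem_unitaryGroup_iff'.mp hA.eigenvectorUnitary.2,
    one_mul, Matrix.trace_diagonal] at this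
  simpa using this

lemma myAdjEq (B : Matrix n n ℝ) (hB : IsUnit B.det) : B.adjugate = B.det • B⁻¹ := by
  rw [Matrix.inv_def, smul_smul, Ring.inverse_eq_inv,
    mul_inv_cancel₀ (isUnit_iff_ne_zero.mp hB), one_smul]

lemma mySqrtAux {A U D : Matrix n n ℝ} (hU' : star U * U = 1)
    (hspec : A = U * (D * D) * star U) : (U * D * star U) * (U * D * star U) = A := by
  rw [hspec]
  simp only [mul_assoc]
  rw [← mul_assoc (star U) U, hU', one_mul]

lemma mySqrt {A : Matrix n n ℝ} (hA : A.PosSemidef) :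
    ((hA.1.eigenvectorUnitary : Matrix n n ℝ) * diagonal (fun i => √(hA.1.eigenvalues i)) *
      star (hA.1.eigenvectorUnitary : Matrix n n ℝ)).PosSemidef ∧
    (hA.1.eigenvectorUnitary : Matrix n n ℝ) * diagonal (fun i => √(hA.1.eigenvalues i)) *
      star (hA.1.eigenvectorUnitary : Matrix n n ℝ) *
    ((hA.1.eigenvectorUnitary : Matrix n n ℝ) * diagonal (fun i => √(hA.1.eigenvalues i)) *
      star (hA.1.eigenvectorUnitary : Matrix n n ℝ)) = A := by
  constructor
  · exact (Matrix.PosSemidef.diagonal (fun i => Real.sqrt_nonneg _)).mul_mul_conjTranspose_same _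
  · refine mySqrtAux (Matrix.mem_unitaryGroup_iff'.mp hA.1.eigenvectorUnitary.2) ?_
    have hspec := hA.1.spectral_theorem
    simp only [Unitary.conjStarAlgAut_apply] at hspec
    have hd : diagonal (fun i => √(hA.1.eigenvalues i)) * diagonal (fun i => √(hA.1.eigenvalues i))
        = diagonal (RCLike.ofReal ∘ hA.1.eigenvalues) := by
      rw [diagonal_mul_diagonal]
      congr 1
      funext i
      exact Real.mul_self_sqrt (hA.eigenvalues_nonneg i)
    rw [hd]
    exact hspec

end Helpers

section Frob

lemma traceCompare {B M : Matrix (Fin 3) (Fin 3) ℝ} (hB : B.PosSemidef) :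
    0 ≤ Matrix.trace (Mᵀ * B * M) := by
  have h := hB.conjTranspose_mul_mul_same M
  rw [conjTranspose_eq_transpose_of_trivial] at h
  exact myPsdTrace h

lemma frobNonneg (M : Matrix (Fin 3) (Fin 3) ℝ) : 0 ≤ frobNorm M := Real.sqrt_nonneg _

lemma frobTranspose (M : Matrix (Fin 3) (Fin 3) ℝ) : frobNorm Mᵀ = frobNorm M := by
  unfold frobNorm
  rw [transpose_transpose, Matrix.trace_mul_comm]

lemma frobSmul (r : ℝ) (M : Matrix (Fin 3) (Fin 3) ℝ) :
    frobNorm (r • M) = |r| * frobNorm M := by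
  unfold frobNorm
  have e : (r • M)ᵀ * (r • M) = (r ^ 2) • (Mᵀ * M) := by
    rw [transpose_smul, smul_mul_assoc, mul_smul_comm, smul_smul, pow_two]
  rw [e, Matrix.trace_smul, smul_eq_mul, Real.sqrt_mul (sq_nonneg r), Real.sqrt_sq_eq_abs]

lemma frobLeftGe {A M : Matrix (Fin 3) (Fin 3) ℝ} {c : ℝ} (hc : 0 ≤ c)
    (h : (A - c • 1).PosSemidef) : c * frobNorm M ≤ frobNorm (A * M) := by
  have hA : A.PosSemidef := by
    have := h.add (myPsdSmul Matrix.PosSemidef.one hc)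
    simpa using this
  obtain ⟨R, hRps, hRR⟩ : ∃ R : Matrix (Fin 3) (Fin 3) ℝ, R.PosSemidef ∧ R * R = A :=
    ⟨_, (mySqrt hA).1, (mySqrt hA).2⟩
  have hRH : Rᴴ = R := hRps.1
  have e1 : R * (A - c • 1) * R = A * A - c • A := by
    rw [mul_sub, sub_mul]
    congr 1
    · rw [← hRR]; noncomm_ring
    · rw [mul_smul_comm, mul_one, smul_mul_assoc, hRR]
  have key : A * A - (c ^ 2) • 1 = R * (A - c • 1) * R + c • (A - c • 1) := by
    rw [e1, smul_sub, smul_smul]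
    module
  have hpsd : (A * A - (c ^ 2) • 1).PosSemidef := by
    rw [key]
    have p1 := h.mul_mul_conjTranspose_same R
    rw [hRH] at p1
    exact p1.add (myPsdSmul h hc)
  have hAt : Aᵀ = A := by rw [← conjTranspose_eq_transpose_of_trivial]; exact hA.1
  have e2 : Mᵀ * (A * A - (c ^ 2) • 1) * M = (A * M)ᵀ * (A * M) - (c ^ 2) • (Mᵀ * M) := by
    rw [transpose_mul, hAt, mul_sub, sub_mul]
    congr 1
    · noncomm_ring
    · rw [mul_smul_comm, mul_one, smul_mul_assoc]
  have h0 := traceCompare hpsd (M := M)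
  rw [e2, Matrix.trace_sub, Matrix.trace_smul, smul_eq_mul, sub_nonneg] at h0
  unfold frobNorm
  have h1 : c * Real.sqrt (Matrix.trace (Mᵀ * M))
      = Real.sqrt ((c ^ 2) * Matrix.trace (Mᵀ * M)) := by
    rw [Real.sqrt_mul (sq_nonneg c), Real.sqrt_sq hc]
  rw [h1]
  exact Real.sqrt_le_sqrt h0

lemma frobLeftLe {A M : Matrix (Fin 3) (Fin 3) ℝ} {c : ℝ} (hc : 0 ≤ c)
    (hA : A.PosSemidef) (h : (c • 1 - A).PosSemidef) : frobNorm (A * M) ≤ c * frobNorm M := by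
  obtain ⟨R, hRps, hRR⟩ : ∃ R : Matrix (Fin 3) (Fin 3) ℝ, R.PosSemidef ∧ R * R = A :=
    ⟨_, (mySqrt hA).1, (mySqrt hA).2⟩
  have hRH : Rᴴ = R := hRps.1
  have e1 : R * (c • 1 - A) * R = c • A - A * A := by
    rw [mul_sub, sub_mul]
    congr 1
    · rw [mul_smul_comm, mul_one, smul_mul_assoc, hRR]
    · rw [← hRR]; noncomm_ring
  have key : (c ^ 2) • 1 - A * A = R * (c • 1 - A) * R + c • (c • 1 - A) := by
    rw [e1, smul_sub, smul_smul]
    module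
  have hpsd : ((c ^ 2) • 1 - A * A).PosSemidef := by
    rw [key]
    have p1 := h.mul_mul_conjTranspose_same R
    rw [hRH] at p1
    exact p1.add (myPsdSmul h hc)
  have hAt : Aᵀ = A := by rw [← conjTranspose_eq_transpose_of_trivial]; exact hA.1
  have e2 : Mᵀ * ((c ^ 2) • 1 - A * A) * M = (c ^ 2) • (Mᵀ * M) - (A * M)ᵀ * (A * M) := by
    rw [transpose_mul, hAt, mul_sub, sub_mul]
    congr 1
    · rw [mul_smul_comm, mul_one, smul_mul_assoc]
    · noncomm_ring
  have h0 := traceCompare hpsd (M := M)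
  rw [e2, Matrix.trace_sub, Matrix.trace_smul, smul_eq_mul, sub_nonneg] at h0
  unfold frobNorm
  have h1 : c * Real.sqrt (Matrix.trace (Mᵀ * M))
      = Real.sqrt ((c ^ 2) * Matrix.trace (Mᵀ * M)) := by
    rw [Real.sqrt_mul (sq_nonneg c), Real.sqrt_sq hc]
  rw [h1]
  exact Real.sqrt_le_sqrt h0

lemma frobRightGe {A M : Matrix (Fin 3) (Fin 3) ℝ} {c : ℝ} (hc : 0 ≤ c)
    (hAh : A.IsHermitian) (h : (A - c • 1).PosSemidef) : c * frobNorm M ≤ frobNorm (M * A) := by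
  have hAt : Aᵀ = A := by rw [← conjTranspose_eq_transpose_of_trivial]; exact hAh
  calc c * frobNorm M = c * frobNorm Mᵀ := by rw [frobTranspose]
    _ ≤ frobNorm (A * Mᵀ) := frobLeftGe hc h
    _ = frobNorm ((A * Mᵀ)ᵀ) := (frobTranspose _).symm
    _ = frobNorm (M * A) := by rw [transpose_mul, transpose_transpose, hAt]

lemma eigSqBounds {S L : Matrix (Fin 3) (Fin 3) ℝ} (hS : S.PosSemidef) (hSS : S * S = L)
    {α β : ℝ} (hlow : (L - α • 1).PosSemidef) (hhigh : (β • 1 - L).PosSemidef) (i : Fin 3) :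
    α ≤ (hS.1.eigenvalues i) ^ 2 ∧ (hS.1.eigenvalues i) ^ 2 ≤ β := by
  set μ := hS.1.eigenvalues i with hμ
  set v : Fin 3 → ℝ := ⇑(hS.1.eigenvectorBasis i) with hvdef
  have hv : S *ᵥ v = μ • v := hS.1.mulVec_eigenvectorBasis i
  have hLv : L *ᵥ v = (μ ^ 2) • v := by
    rw [← hSS, ← mulVec_mulVec, hv, mulVec_smul, hv, smul_smul, ← pow_two]
  have hd : v ⬝ᵥ v = 1 := by
    have h1 := EuclideanSpace.inner_eq_star_dotProduct (hS.1.eigenvectorBasis i)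
      (hS.1.eigenvectorBasis i)
    have h2 : (inner ℝ (hS.1.eigenvectorBasis i) (hS.1.eigenvectorBasis i) : ℝ) = 1 := by
      rw [real_inner_self_eq_norm_sq, hS.1.eigenvectorBasis.orthonormal.1 i]
      norm_num
    rw [h2] at h1
    simpa using h1.symm
  constructor
  · have h0 := hlow.dotProduct_mulVec_nonneg v
    rw [sub_mulVec, smul_mulVec, one_mulVec, hLv, star_trivial,
      dotProduct_sub, dotProduct_smul, dotProduct_smul, hd] at h0
    simp only [smul_eq_mul, mul_one] at h0
    linarith
  · have h0 := hhigh.dotProduct_mulVec_nonneg v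
    rw [sub_mulVec, smul_mulVec, one_mulVec, hLv, star_trivial,
      dotProduct_sub, dotProduct_smul, dotProduct_smul, hd] at h0
    simp only [smul_eq_mul, mul_one] at h0
    linarith

end Frob

set_option maxHeartbeats 1600000 in
theorem stmt9 (ε a0 : ℝ) (hε : 0 < ε) (hε3 : ε ≤ 1 / 3) (ha0 : 0 < a0)
    (Q Q0 L L0 F : Matrix (Fin 3) (Fin 3) ℝ)
    (hQ : Q.IsHermitian) (htrQ : Q.trace = 0) (hminQ : -1 / 3 + ε ≤ lMin hQ)
    (hQ0 : Q0.IsHermitian) (htrQ0 : Q0.trace = 0) (hminQ0 : -1 / 3 + ε ≤ lMin hQ0)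
    (hLdef : L = a0 • (Q + (1 / 3 : ℝ) • (1 : Matrix (Fin 3) (Fin 3) ℝ)))
    (hL0def : L0 = a0 • (Q0 + (1 / 3 : ℝ) • (1 : Matrix (Fin 3) (Fin 3) ℝ)))
    (hL : L.PosDef) (hL0 : L0.PosDef) (hF : IsUnit F.det) :
    (ε / 3) * frobNorm F.adjugate ≤
      frobNorm ((msqrt hL)⁻¹ * F * msqrt hL0).adjugate := by
  unfold lMin at hminQ hminQ0
  set α := a0 * ε with hαdef
  set β := a0 * (1 - 2 * ε) with hβdef
  have hα : 0 < α := mul_pos ha0 hε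
  have hβ : 0 < β := mul_pos ha0 (by linarith)
  -- eigenvalue bounds for Q and Q0
  have hQlow : ∀ i, -1 / 3 + ε ≤ hQ.eigenvalues i := fun i =>
    le_trans hminQ (ciInf_le (Set.Finite.bddBelow (Set.finite_range _)) i)
  have hQ0low : ∀ i, -1 / 3 + ε ≤ hQ0.eigenvalues i := fun i =>
    le_trans hminQ0 (ciInf_le (Set.Finite.bddBelow (Set.finite_range _)) i)
  have erasecard : ∀ j : Fin 3, (Finset.univ.erase j).card = 2 := fun j => by
    rw [Finset.card_erase_of_mem (Finset.mem_univ j), Finset.card_univ]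
    rfl
  have highOfLow : ∀ (A : Matrix (Fin 3) (Fin 3) ℝ) (hA : A.IsHermitian), A.trace = 0 →
      (∀ i, -1 / 3 + ε ≤ hA.eigenvalues i) → ∀ j, hA.eigenvalues j ≤ 2 / 3 - 2 * ε := by
    intro A hA htr hlow j
    have hsum : ∑ i, hA.eigenvalues i = 0 := by rw [← myTraceEig hA, htr]
    have hsplit : hA.eigenvalues j + ∑ i ∈ Finset.univ.erase j, hA.eigenvalues i = 0 := by
      rw [Finset.add_sum_erase _ _ (Finset.mem_univ j)]
      exact hsum
    have hrest : 2 * (-1 / 3 + ε) ≤ ∑ i ∈ Finset.univ.erase j, hA.eigenvalues i := by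
      calc 2 * (-1 / 3 + ε) = ∑ _i ∈ Finset.univ.erase j, (-1 / 3 + ε) := by
            rw [Finset.sum_const, erasecard j, nsmul_eq_mul]
            norm_num
        _ ≤ _ := Finset.sum_le_sum fun i _ => hlow i
    linarith
  have hQhigh := highOfLow Q hQ htrQ hQlow
  have hQ0high := highOfLow Q0 hQ0 htrQ0 hQ0low
  -- matrix inequalities for L, L0
  have hLlow : (L - α • 1).PosSemidef := by
    have h1 := myPsdSmul (mySpecLow hQ (c := -1 / 3 + ε) hQlow) ha0.le
    have e : a0 • (Q - (-1 / 3 + ε) • (1 : Matrix (Fin 3) (Fin 3) ℝ)) = L - α • 1 := by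
      rw [hLdef, hαdef]; module
    rwa [e] at h1
  have hLhigh : (β • 1 - L).PosSemidef := by
    have h1 := myPsdSmul (mySpecHigh hQ (c := 2 / 3 - 2 * ε) hQhigh) ha0.le
    have e : a0 • ((2 / 3 - 2 * ε) • (1 : Matrix (Fin 3) (Fin 3) ℝ) - Q) = β • 1 - L := by
      rw [hLdef, hβdef]; module
    rwa [e] at h1
  have hL0low : (L0 - α • 1).PosSemidef := by
    have h1 := myPsdSmul (mySpecLow hQ0 (c := -1 / 3 + ε) hQ0low) ha0.le
    have e : a0 • (Q0 - (-1 / 3 + ε) • (1 : Matrix (Fin 3) (Fin 3) ℝ)) = L0 - α • 1 := by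
      rw [hL0def, hαdef]; module
    rwa [e] at h1
  have hL0high : (β • 1 - L0).PosSemidef := by
    have h1 := myPsdSmul (mySpecHigh hQ0 (c := 2 / 3 - 2 * ε) hQ0high) ha0.le
    have e : a0 • ((2 / 3 - 2 * ε) • (1 : Matrix (Fin 3) (Fin 3) ℝ) - Q0) = β • 1 - L0 := by
      rw [hL0def, hβdef]; module
    rwa [e] at h1
  -- square roots
  set S := msqrt hL with hSdef
  set S0 := msqrt hL0 with hS0def
  have hSps : S.PosSemidef := (mySqrt hL.posSemidef).1
  have hS0ps : S0.PosSemidef := (mySqrt hL0.posSemidef).1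
  have hSS : S * S = L := (mySqrt hL.posSemidef).2
  have hS0S0 : S0 * S0 = L0 := (mySqrt hL0.posSemidef).2
  set μ := hSps.1.eigenvalues with hμdef
  set ν := hS0ps.1.eigenvalues with hνdef
  have hsqα : 0 < Real.sqrt α := Real.sqrt_pos.mpr hα
  have hμlow : ∀ i, Real.sqrt α ≤ μ i := fun i => by
    have h1 := (eigSqBounds hSps hSS hLlow hLhigh i).1
    calc Real.sqrt α ≤ Real.sqrt ((μ i) ^ 2) := Real.sqrt_le_sqrt h1
      _ = μ i := Real.sqrt_sq (hSps.eigenvalues_nonneg i)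
  have hμhigh : ∀ i, μ i ≤ Real.sqrt β := fun i => by
    have h1 := (eigSqBounds hSps hSS hLlow hLhigh i).2
    calc μ i = Real.sqrt ((μ i) ^ 2) := (Real.sqrt_sq (hSps.eigenvalues_nonneg i)).symm
      _ ≤ Real.sqrt β := Real.sqrt_le_sqrt h1
  have hνlow : ∀ i, Real.sqrt α ≤ ν i := fun i => by
    have h1 := (eigSqBounds hS0ps hS0S0 hL0low hL0high i).1
    calc Real.sqrt α ≤ Real.sqrt ((ν i) ^ 2) := Real.sqrt_le_sqrt h1
      _ = ν i := Real.sqrt_sq (hS0ps.eigenvalues_nonneg i)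
  have hμpos : ∀ i, 0 < μ i := fun i => lt_of_lt_of_le hsqα (hμlow i)
  have hνpos : ∀ i, 0 < ν i := fun i => lt_of_lt_of_le hsqα (hνlow i)
  obtain ⟨j, -, hjmin⟩ := Finset.exists_min_image Finset.univ μ ⟨0, Finset.mem_univ 0⟩
  obtain ⟨k, -, hkmax⟩ := Finset.exists_max_image Finset.univ ν ⟨0, Finset.mem_univ 0⟩
  have hSlow : (S - μ j • 1).PosSemidef :=
    mySpecLow hSps.1 (fun i => hjmin i (Finset.mem_univ i))
  have hS0high : (ν k • 1 - S0).PosSemidef :=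
    mySpecHigh hS0ps.1 (fun i => hkmax i (Finset.mem_univ i))
  -- determinants
  have hdetS : S.det = ∏ i, μ i := by
    simpa using hSps.1.det_eq_prod_eigenvalues
  have hdetS0 : S0.det = ∏ i, ν i := by
    simpa using hS0ps.1.det_eq_prod_eigenvalues
  have hdetSpos : 0 < S.det := by
    rw [hdetS]; exact Finset.prod_pos fun i _ => hμpos i
  have hdetS0pos : 0 < S0.det := by
    rw [hdetS0]; exact Finset.prod_pos fun i _ => hνpos i
  have hSu : IsUnit S.det := isUnit_iff_ne_zero.mpr hdetSpos.ne'
  have hS0u : IsUnit S0.det := isUnit_iff_ne_zero.mpr hdetS0pos.ne'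
  have hdetS_le : S.det ≤ μ j * β := by
    rw [hdetS, ← Finset.mul_prod_erase Finset.univ μ (Finset.mem_univ j)]
    refine mul_le_mul_of_nonneg_left ?_ (hμpos j).le
    calc ∏ i ∈ Finset.univ.erase j, μ i
        ≤ ∏ _i ∈ Finset.univ.erase j, Real.sqrt β :=
          Finset.prod_le_prod (fun i _ => (hμpos i).le) (fun i _ => hμhigh i)
      _ = Real.sqrt β ^ 2 := by rw [Finset.prod_const, erasecard j]
      _ = β := Real.sq_sqrt hβ.le
  have hdetS0_ge : ν k * α ≤ S0.det := by
    rw [hdetS0, ← Finset.mul_prod_erase Finset.univ ν (Finset.mem_univ k)]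
    refine mul_le_mul_of_nonneg_left ?_ (hνpos k).le
    calc α = Real.sqrt α ^ 2 := (Real.sq_sqrt hα.le).symm
      _ = ∏ _i ∈ Finset.univ.erase k, Real.sqrt α := by rw [Finset.prod_const, erasecard k]
      _ ≤ ∏ i ∈ Finset.univ.erase k, ν i :=
          Finset.prod_le_prod (fun i _ => (Real.sqrt_nonneg α)) (fun i _ => hνlow i)
  -- adjugate computation
  set N := F.adjugate with hNdef
  set r := S0.det * (S.det)⁻¹ with hrdef
  have hrpos : 0 < r := mul_pos hdetS0pos (inv_pos.mpr hdetSpos)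
  have e1 : (S⁻¹ * F * S0).adjugate = r • (S0⁻¹ * (N * S)) := by
    have hSinvdet : (S⁻¹).det = (S.det)⁻¹ := by rw [det_nonsing_inv, Ring.inverse_eq_inv]
    have hSinvu : IsUnit (S⁻¹).det := by
      rw [hSinvdet]
      exact isUnit_iff_ne_zero.mpr (inv_ne_zero hdetSpos.ne')
    have hadjSinv : (S⁻¹).adjugate = (S.det)⁻¹ • S := by
      rw [myAdjEq _ hSinvu, hSinvdet, nonsing_inv_nonsing_inv _ hSu]
    rw [adjugate_mul_distrib, adjugate_mul_distrib, myAdjEq _ hS0u, hadjSinv,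
      mul_smul_comm, mul_smul_comm, smul_mul_assoc, smul_smul,
      mul_comm (S.det)⁻¹ S0.det, ← hNdef, hrdef]
  -- frobenius chain
  have hNS : μ j * frobNorm N ≤ frobNorm (N * S) := frobRightGe (hμpos j).le hSps.1 hSlow
  set Y := S0⁻¹ * (N * S) with hYdef
  have hS0Y : S0 * Y = N * S := by
    rw [hYdef, ← mul_assoc, mul_nonsing_inv _ hS0u, one_mul]
  have hYle : frobNorm (N * S) ≤ ν k * frobNorm Y := by
    rw [← hS0Y]
    exact frobLeftLe (hνpos k).le hS0ps hS0high
  have hYge : (ν k)⁻¹ * (μ j * frobNorm N) ≤ frobNorm Y := by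
    rw [inv_mul_le_iff₀ (hνpos k)]
    exact le_trans hNS hYle
  -- scalar bound
  have h1 : α ≤ S0.det * (ν k)⁻¹ := by
    rw [← div_eq_mul_inv, le_div_iff₀ (hνpos k)]
    linarith [hdetS0_ge]
  have h2 : β⁻¹ ≤ μ j * (S.det)⁻¹ := by
    rw [← div_eq_mul_inv, le_div_iff₀ hdetSpos, inv_mul_le_iff₀ hβ]
    linarith [hdetS_le]
  have h3 : α * β⁻¹ ≤ (S0.det * (ν k)⁻¹) * (μ j * (S.det)⁻¹) :=
    mul_le_mul h1 h2 (inv_pos.mpr hβ).le (le_trans hα.le h1)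
  have h4 : ε / 3 ≤ α * β⁻¹ := by
    have e : α * β⁻¹ = ε / (1 - 2 * ε) := by
      rw [hαdef, hβdef, ← div_eq_mul_inv, mul_div_mul_left _ _ ha0.ne']
    rw [e, div_le_div_iff₀ (by norm_num) (by linarith)]
    nlinarith [sq_nonneg ε, hε.le]
  have hcoef : ε / 3 ≤ r * (ν k)⁻¹ * μ j := by
    calc ε / 3 ≤ α * β⁻¹ := h4
      _ ≤ (S0.det * (ν k)⁻¹) * (μ j * (S.det)⁻¹) := h3
      _ = r * (ν k)⁻¹ * μ j := by rw [hrdef]; ring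
  calc (ε / 3) * frobNorm N
      ≤ (r * (ν k)⁻¹ * μ j) * frobNorm N :=
        mul_le_mul_of_nonneg_right hcoef (frobNonneg N)
    _ = r * ((ν k)⁻¹ * (μ j * frobNorm N)) := by ring
    _ ≤ r * frobNorm Y := mul_le_mul_of_nonneg_left hYge hrpos.le
    _ = |r| * frobNorm Y := by rw [abs_of_pos hrpos]
    _ = frobNorm ((S⁻¹ * F * S0).adjugate) := by rw [e1, frobSmul]
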